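/- Equip E := ℂ^ℕ with the product σ-algebra of countably many copies of the Borel σ-algebra of ℂ and with the product measure μ = ⊗ₙ μₙ of a sequence of Borel probability measures μₙ on ℂ. Define x ∼ y iff there exists N with xₙ = yₙ for all n ≥ N. Let σ : E → ℂ be a closed-valued open-measurable multifunction and σ_∼(x) := ⋂_{y ∼ x} σ(y). Then there exists a closed set A ⊆ ℂ such that the set {x ∈ E | σ_∼(x) = A} has μ-outer measure 1 (equivalently, it lies in the μ-completion of the product σ-algebra and has μ-measure 1). -/

import Mathlib

open MeasureTheory Set Filter Topology
open scoped ENNReal NNReal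

variable {X : Type*} [TopologicalSpace X] [PolishSpace X] [MeasurableSpace X] [BorelSpace X]

/-- Inner approximation of the range of a continuous function from Baire space by compacts. -/
theorem exists_isCompact_measure_range_le (μ : Measure X) [IsFiniteMeasure μ]
    (f : (ℕ → ℕ) → X) (hf : Continuous f) {ε : ℝ≥0∞} (hε : ε ≠ 0) :
    ∃ K : Set X, IsCompact K ∧ K ⊆ range f ∧ μ (range f) ≤ μ K + ε := by
  letI := TopologicalSpace.upgradeIsCompletelyMetrizable X
  by_cases h0 : μ (range f) ≤ ε
  · exact ⟨∅, isCompact_empty, empty_subset _, h0.trans (by simp)⟩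
  push_neg at h0
  set c := μ (range f) - ε with hc
  have hcl : c < μ (range f) := ENNReal.sub_lt_self (measure_ne_top μ _)
    (by intro h; rw [h] at h0; exact absurd h0 (not_lt.mpr (zero_le))) hε
  -- sets bounded on the first n coordinates
  set S : (ℕ → ℕ) → ℕ → Set (ℕ → ℕ) := fun v n => {p | ∀ i < n, p i ≤ v i} with hS
  have key : ∀ (v : ℕ → ℕ) (n : ℕ), c < μ (f '' S v n) →
      ∃ k, c < μ (f '' S (Function.update v n k) (n + 1)) := by
    intro v n hv
    have hSeq : ∀ k, S (Function.update v n k) (n+1) = {p | p ∈ S v n ∧ p n ≤ k} := by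
      intro k
      ext p
      simp only [hS, mem_setOf_eq, Nat.lt_succ_iff_lt_or_eq]
      constructor
      · intro h
        refine ⟨fun i hi => ?_, ?_⟩
        · have := h i (Or.inl hi)
          rwa [Function.update_of_ne hi.ne] at this
        · have := h n (Or.inr rfl)
          rwa [Function.update_self] at this
      · rintro ⟨h1, h2⟩ i (hi | rfl)
        · rw [Function.update_of_ne hi.ne]; exact h1 i hi
        · rwa [Function.update_self]
    have hdir : Directed (· ⊆ ·) (fun k => f '' {p | p ∈ S v n ∧ p n ≤ k}) := by
      intro a b
      exact ⟨max a b, image_mono (fun p hp => ⟨hp.1, hp.2.trans (le_max_left _ _)⟩),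
        image_mono (fun p hp => ⟨hp.1, hp.2.trans (le_max_right _ _)⟩)⟩
    have hun' : (⋃ k, {p | p ∈ S v n ∧ p n ≤ k}) = S v n := by
      ext p
      simp only [mem_iUnion, mem_setOf_eq]
      exact ⟨fun h => h.choose_spec.1, fun h => ⟨p n, h, le_rfl⟩⟩
    have hun : (⋃ k, f '' {p | p ∈ S v n ∧ p n ≤ k}) = f '' S v n := by
      rw [← image_iUnion, hun']
    have := hdir.measure_iUnion (μ := μ)
    rw [hun] at this
    rw [this] at hv
    obtain ⟨k, hk⟩ := lt_iSup_iff.mp hv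
    exact ⟨k, by rwa [hSeq]⟩
  -- recursive construction
  let τ : (n : ℕ) → {v : ℕ → ℕ // c < μ (f '' S v n)} := by
    intro n
    induction n with
    | zero =>
      refine ⟨fun _ => 0, ?_⟩
      have : S (fun _ => 0) 0 = univ := by ext p; simp [hS]
      rw [this, image_univ]
      exact hcl
    | succ n ih =>
      exact ⟨Function.update ih.1 n (Classical.choose (key ih.1 n ih.2)),
        Classical.choose_spec (key ih.1 n ih.2)⟩
  set σ : ℕ → ℕ := fun n => (τ (n+1)).1 n with hσdef
  have coh : ∀ n i, i < n → (τ n).1 i = σ i := by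
    intro n
    induction n with
    | zero => intro i hi; omega
    | succ n ih =>
      intro i hi
      rcases Nat.lt_succ_iff_lt_or_eq.mp hi with hi | rfl
      · have : (τ (n+1)).1 i = (τ n).1 i := Function.update_of_ne hi.ne _ _
        rw [this, ih i hi]
      · rfl
  have hinv : ∀ n, c < μ (f '' S σ n) := by
    intro n
    have : S σ n = S (τ n).1 n := by
      ext p
      simp only [hS, mem_setOf_eq]
      exact ⟨fun h i hi => by rw [coh n i hi]; exact h i hi,
             fun h i hi => by rw [← coh n i hi]; exact h i hi⟩
    rw [this]
    exact (τ n).2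
  refine ⟨f '' {p | ∀ i, p i ≤ σ i}, ?_, image_subset_range _ _, ?_⟩
  · refine IsCompact.image ?_ hf
    have : {p : ℕ → ℕ | ∀ i, p i ≤ σ i} = Set.pi univ (fun i => Iic (σ i)) := by
      ext p; simp only [Set.mem_pi, mem_univ, forall_true_left, mem_Iic, mem_setOf_eq]
    rw [this]
    exact isCompact_univ_pi (fun i => (Set.finite_Iic _).isCompact)
  · have hsub : (⋂ n, closure (f '' S σ n)) ⊆ f '' {p | ∀ i, p i ≤ σ i} := by
      intro z hz
      simp only [mem_iInter] at hz
      have hp : ∀ n : ℕ, ∃ p ∈ S σ n, dist z (f p) < 1 / (n + 1) := by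
        intro n
        have := hz n
        rw [Metric.mem_closure_iff] at this
        obtain ⟨y, ⟨p, hp, rfl⟩, hd⟩ := this (1 / (n + 1)) (by positivity)
        exact ⟨p, hp, hd⟩
      choose p hpS hpd using hp
      set σ' : ℕ → ℕ := fun i => max (σ i) ((Finset.range (i+1)).sup (fun n => p n i)) with hσ'
      have hmem : ∀ n, p n ∈ Set.pi univ (fun i => Iic (σ' i)) := by
        intro n
        intro i _
        simp only [mem_Iic, hσ']
        rcases lt_or_ge i n with hin | hin
        · exact le_max_of_le_left (hpS n i hin)
        · exact le_max_of_le_right (Finset.le_sup (f := fun n => p n i) (Finset.mem_range.mpr (Nat.lt_succ_of_le hin)))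
      have hcomp : IsCompact (Set.pi univ (fun i => Iic (σ' i))) :=
        isCompact_univ_pi (fun i => (Set.finite_Iic _).isCompact)
      obtain ⟨q, hq, φ, hφ, hconv⟩ := hcomp.tendsto_subseq hmem
      refine ⟨q, ?_, ?_⟩
      · intro i
        have hcoord : Tendsto (fun n => p (φ n) i) atTop (𝓝 (q i)) :=
          (continuous_apply i).continuousAt.tendsto.comp hconv
        have hev : ∀ᶠ n in atTop, p (φ n) i = q i := by
          have : {q i} ∈ 𝓝 (q i) := (isOpen_discrete ({q i} : Set ℕ)).mem_nhds rfl
          filter_upwards [hcoord this] with n hn using hn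
        have hev2 : ∀ᶠ n in atTop, p (φ n) i ≤ σ i := by
          filter_upwards [eventually_ge_atTop (i+1)] with n hn
          have hle : n ≤ φ n := hφ.le_apply
          exact hpS (φ n) i (by omega)
        obtain ⟨n, h1, h2⟩ := (hev.and hev2).exists
        rw [← h1]; exact h2
      · -- f q = z
        have h1 : Tendsto (fun n => f (p (φ n))) atTop (𝓝 (f q)) :=
          (hf.continuousAt.tendsto).comp hconv
        have h2 : Tendsto (fun n => f (p (φ n))) atTop (𝓝 z) := by
          rw [tendsto_iff_dist_tendsto_zero]
          have hb : ∀ n : ℕ, dist (f (p (φ n))) z ≤ 1 / (n + 1) := by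
            intro n
            rw [dist_comm]
            refine (hpd (φ n)).le.trans (one_div_le_one_div_of_le (by positivity) ?_)
            have h1 : n ≤ φ n := hφ.le_apply
            exact_mod_cast Nat.succ_le_succ h1
          refine squeeze_zero (fun n => dist_nonneg) hb ?_
          exact tendsto_one_div_add_atTop_nhds_zero_nat
        exact tendsto_nhds_unique h1 h2
    have hKc : c ≤ μ (f '' {p | ∀ i, p i ≤ σ i}) := by
      refine le_trans ?_ (measure_mono hsub)
      have hmono : Antitone (fun n => closure (f '' S σ n)) := fun a b hab =>
        closure_mono (image_mono (fun p hp i hi => hp i (lt_of_lt_of_le hi hab)))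
      rw [hmono.measure_iInter (fun n => (isClosed_closure.measurableSet).nullMeasurableSet)
        ⟨0, measure_ne_top μ _⟩]
      exact le_iInf fun n => ((hinv n).trans_le (measure_mono subset_closure)).le
    rw [hc] at hKc
    exact tsub_le_iff_right.mp hKc
theorem AnalyticSet.nullMeasurableSet' {X : Type*} [TopologicalSpace X] [PolishSpace X]
    [MeasurableSpace X] [BorelSpace X] (μ : Measure X) [IsFiniteMeasure μ] {A : Set X}
    (hA : AnalyticSet A) : NullMeasurableSet A μ := by
  rw [AnalyticSet] at hA
  rcases hA with rfl | ⟨f, hf, rfl⟩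
  · exact MeasurableSet.empty.nullMeasurableSet
  have hK : ∀ j : ℕ, ∃ K : Set X, IsCompact K ∧ K ⊆ range f ∧
      μ (range f) ≤ μ K + (↑(j+1))⁻¹ := by
    intro j
    exact exists_isCompact_measure_range_le μ f hf (by simp)
  choose K hKc hKsub hKle using hK
  set B := ⋃ j, K j with hB
  have hBsub : B ⊆ range f := iUnion_subset hKsub
  have hBmeas : MeasurableSet B :=
    MeasurableSet.iUnion (fun j => (hKc j).isClosed.measurableSet)
  have hle : μ (range f) ≤ μ B := by
    refine ENNReal.le_of_forall_pos_le_add (fun ε hε _ => ?_)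
    obtain ⟨j, hj⟩ := exists_nat_gt (ε : ℝ)⁻¹
    refine (hKle j).trans (add_le_add (measure_mono (subset_iUnion K j)) ?_)
    rw [ENNReal.inv_le_iff_inv_le]
    have h1 : ((ε⁻¹ : ℝ≥0) : ℝ≥0∞) ≤ (j : ℝ≥0∞) := by
      rw [← ENNReal.coe_natCast, ENNReal.coe_le_coe, ← NNReal.coe_le_coe, NNReal.coe_inv]
      push_cast
      exact hj.le
    calc ((ε:ℝ≥0):ℝ≥0∞)⁻¹ = ((ε⁻¹ : ℝ≥0) : ℝ≥0∞) := by rw [ENNReal.coe_inv hε.ne']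
      _ ≤ (j : ℝ≥0∞) := h1
      _ ≤ (j : ℝ≥0∞) + 1 := le_self_add
      _ = ((j+1 : ℕ) : ℝ≥0∞) := by push_cast; ring
  have hnull : μ (range f \ B) = 0 := by
    have h1 : range f \ B ⊆ toMeasurable μ (range f) \ B :=
      diff_subset_diff_left (subset_toMeasurable μ _)
    refine measure_mono_null h1 ?_
    rw [measure_diff (hBsub.trans (subset_toMeasurable μ _)) hBmeas.nullMeasurableSet
      (measure_ne_top μ _), measure_toMeasurable]
    exact tsub_eq_zero_of_le hle
  have : range f = B ∪ (range f \ B) := (union_diff_cancel hBsub).symm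
  rw [this]
  exact hBmeas.nullMeasurableSet.union (NullMeasurableSet.of_null hnull)
open ProbabilityTheory in
theorem zero_one_invariant (μs : ℕ → Measure ℂ) (hμs : ∀ n, IsProbabilityMeasure (μs n))
    (μ : Measure (ℕ → ℂ)) (hμ : IsProbabilityMeasure μ)
    (hprod : ∀ s : Finset ℕ, ∀ A : ℕ → Set ℂ, (∀ n ∈ s, MeasurableSet (A n)) →
      μ {x | ∀ n ∈ s, x n ∈ A n} = ∏ n ∈ s, μs n (A n))
    (S : Set (ℕ → ℂ))
    (hSinv : ∀ (x : ℕ → ℂ) (N : ℕ) (c : ℕ → ℂ),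
        ((fun n => if n < N then c n else x n) ∈ S ↔ x ∈ S))
    (hSm : NullMeasurableSet S μ) : μ S = 0 ∨ μ S = 1 := by
  classical
  -- cylinder sets
  set C : Set (Set (ℕ → ℂ)) := {t | ∃ (s : Finset ℕ) (A : ℕ → Set ℂ),
    (∀ n ∈ s, MeasurableSet (A n)) ∧ t = {x | ∀ n ∈ s, x n ∈ A n}} with hC
  have cylMeas : ∀ t ∈ C, MeasurableSet t := by
    rintro t ⟨s, A, hA, rfl⟩
    have : {x : ℕ → ℂ | ∀ n ∈ s, x n ∈ A n} = ⋂ n ∈ s, (fun x => x n) ⁻¹' A n := by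
      ext x; simp
    rw [this]
    exact MeasurableSet.biInter s.countable_toSet
      (fun n hn => (measurable_pi_apply n) (hA n hn))
  have hgen : (inferInstance : MeasurableSpace (ℕ → ℂ)) = MeasurableSpace.generateFrom C := by
    refine le_antisymm ?_ (MeasurableSpace.generateFrom_le cylMeas)
    rw [show (inferInstance : MeasurableSpace (ℕ → ℂ)) = MeasurableSpace.pi from rfl,
      MeasurableSpace.pi]
    refine iSup_le fun n => ?_
    have : @Measurable _ _ (MeasurableSpace.generateFrom C) _ (fun x : ℕ → ℂ => x n) := by
      intro A hA
      refine MeasurableSpace.measurableSet_generateFrom ⟨{n}, fun _ => A, fun _ _ => hA, ?_⟩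
      ext x; simp
    exact measurable_iff_comap_le.mp this
  have hPi : IsPiSystem C := by
    rintro t1 ⟨s1, A1, hA1, rfl⟩ t2 ⟨s2, A2, hA2, rfl⟩ -
    refine ⟨s1 ∪ s2, fun n => (if n ∈ s1 then A1 n else Set.univ) ∩
      (if n ∈ s2 then A2 n else Set.univ), ?_, ?_⟩
    · intro n _
      refine MeasurableSet.inter ?_ ?_ <;> split <;>
        first | exact hA1 n ‹_› | exact hA2 n ‹_› | exact MeasurableSet.univ
    · ext x
      simp only [Set.mem_inter_iff, Set.mem_setOf_eq, Finset.mem_union, Set.mem_inter_iff]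
      constructor
      · rintro ⟨h1, h2⟩ n hn
        constructor
        · split
          · exact h1 n ‹_›
          · trivial
        · split
          · exact h2 n ‹_›
          · trivial
      · intro h
        constructor
        · intro n hn
          have := (h n (Or.inl hn)).1
          rwa [if_pos hn] at this
        · intro n hn
          have := (h n (Or.inr hn)).2
          rwa [if_pos hn] at this
  -- recombination maps
  set φ : ℕ → (ℕ → ℂ) × (ℕ → ℂ) → (ℕ → ℂ) :=
    fun N p n => if n < N then p.1 n else p.2 n with hφ
  have hφm : ∀ N, Measurable (φ N) := by
    intro N
    rw [measurable_pi_iff]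
    intro n
    by_cases h : n < N
    · simp only [hφ, h, if_true]
      exact (measurable_pi_apply n).comp measurable_fst
    · simp only [hφ, h, if_false]
      exact (measurable_pi_apply n).comp measurable_snd
  have hmap : ∀ N, Measure.map (φ N) (μ.prod μ) = μ := by
    intro N
    refine MeasureTheory.ext_of_generate_finite C hgen hPi ?_ ?_
    · rintro t ⟨s, A, hA, rfl⟩
      rw [Measure.map_apply (hφm N) (cylMeas _ ⟨s, A, hA, rfl⟩)]
      have hpre : φ N ⁻¹' {x | ∀ n ∈ s, x n ∈ A n} =
          {w | ∀ n ∈ s.filter (· < N), w n ∈ A n} ×ˢ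
          {x | ∀ n ∈ s.filter (fun n => ¬ n < N), x n ∈ A n} := by
        ext ⟨w, x⟩
        simp only [Set.mem_preimage, Set.mem_setOf_eq, Set.mem_prod, Finset.mem_filter, hφ]
        constructor
        · intro h
          exact ⟨fun n hn => by have := h n hn.1; rwa [if_pos hn.2] at this,
                 fun n hn => by have := h n hn.1; rwa [if_neg hn.2] at this⟩
        · rintro ⟨h1, h2⟩ n hn
          by_cases hnN : n < N
          · rw [if_pos hnN]; exact h1 n ⟨hn, hnN⟩
          · rw [if_neg hnN]; exact h2 n ⟨hn, hnN⟩
      rw [hpre, Measure.prod_prod,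
        hprod _ _ (fun n hn => hA n (Finset.mem_filter.mp hn).1),
        hprod _ _ (fun n hn => hA n (Finset.mem_filter.mp hn).1),
        hprod _ _ hA]
      exact Finset.prod_filter_mul_prod_filter_not s (· < N) _
    · simp only [Set.mem_setOf_eq, Measure.map_apply (hφm N) MeasurableSet.univ,
        Set.preimage_univ]
      exact (measure_univ).trans (measure_univ).symm
  -- choose good prefixes
  have hgood : ∀ (N : ℕ) (Z : Set (ℕ → ℂ)), MeasurableSet Z → μ Z = 0 →
      ∃ c : ℕ → ℂ, μ {x | φ N (c, x) ∈ Z} = 0 := by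
    intro N Z hZm hZ0
    have h0 : (μ.prod μ) (φ N ⁻¹' Z) = 0 := by
      rw [← Measure.map_apply (hφm N) hZm, hmap N, hZ0]
    rw [Measure.measure_prod_null ((hφm N) hZm)] at h0
    haveI : (ae μ).NeBot := ae_neBot.mpr (IsProbabilityMeasure.ne_zero μ)
    obtain ⟨c, hc⟩ := h0.exists
    exact ⟨c, hc⟩
  -- approximate S
  set B := toMeasurable μ S with hB
  have hBS : μ ((S \ B) ∪ (B \ S)) = 0 := by
    have h1 := NullMeasurableSet.toMeasurable_ae_eq hSm
    rw [MeasureTheory.ae_eq_set] at h1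
    exact le_antisymm (le_trans (measure_union_le _ _) (by rw [h1.1, h1.2]; simp)) (zero_le)
  set Z := toMeasurable μ ((S \ B) ∪ (B \ S)) with hZ
  have hZm : MeasurableSet Z := measurableSet_toMeasurable _ _
  have hZ0 : μ Z = 0 := by rw [hZ, measure_toMeasurable]; exact hBS
  have hZsub : (S \ B) ∪ (B \ S) ⊆ Z := subset_toMeasurable _ _
  choose c hc using fun N => hgood N Z hZm hZ0
  set T : ℕ → (ℕ → ℂ) → (ℕ → ℂ) := fun N x n => if n < N then c N n else x n with hT
  have hTS : ∀ N, T N ⁻¹' S = S := by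
    intro N; ext x; exact hSinv x N (c N)
  set Cs : ℕ → Set (ℕ → ℂ) := fun N => T N ⁻¹' B with hCs
  have hCnull : ∀ N, μ ((S \ Cs N) ∪ (Cs N \ S)) = 0 := by
    intro N
    have : (S \ Cs N) ∪ (Cs N \ S) = T N ⁻¹' ((S \ B) ∪ (B \ S)) := by
      rw [Set.preimage_union, Set.preimage_diff, Set.preimage_diff, hTS N]
    rw [this]
    refine measure_mono_null (Set.preimage_mono hZsub) ?_
    exact hc N
  set B' : Set (ℕ → ℂ) := ⋂ M, ⋃ N, Cs (M + N) with hB'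
  -- B' is a tail set
  set 𝔰 : ℕ → MeasurableSpace (ℕ → ℂ) :=
    fun n => MeasurableSpace.comap (fun x => x n) inferInstance with h𝔰
  have h_le : ∀ n, 𝔰 n ≤ (inferInstance : MeasurableSpace (ℕ → ℂ)) := by
    intro n
    exact measurable_iff_comap_le.mp (measurable_pi_apply n)
  have htail : MeasurableSet[Filter.limsup 𝔰 Filter.atTop] B' := by
    rw [Filter.limsup_eq_iInf_iSup_of_nat]
    rw [MeasurableSpace.measurableSet_iInf]
    intro M
    have hCsM : ∀ K, M ≤ K → MeasurableSet[⨆ i, ⨆ _ : i ≥ M, 𝔰 i] (Cs K) := by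
      intro K hK
      have hTm : @Measurable _ _ (⨆ i, ⨆ _ : i ≥ M, 𝔰 i) _ (T K) := by
        have h1 : (inferInstance : MeasurableSpace (ℕ → ℂ)) ≤
            MeasurableSpace.map (T K) (⨆ i, ⨆ _ : i ≥ M, 𝔰 i) := by
          refine iSup_le fun n => ?_
          intro s hs
          obtain ⟨A, hA, rfl⟩ := MeasurableSpace.measurableSet_comap.mp hs
          show MeasurableSet[⨆ i, ⨆ _ : i ≥ M, 𝔰 i] (T K ⁻¹' ((fun x => x n) ⁻¹' A))
          by_cases h : n < K
          · have : T K ⁻¹' ((fun x => x n) ⁻¹' A) =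
                (if c K n ∈ A then Set.univ else (∅ : Set (ℕ → ℂ))) := by
              ext x
              simp only [Set.mem_preimage, hT, h, if_true]
              split <;> simp [*]
            rw [this]
            split
            · exact @MeasurableSet.univ _ (⨆ i, ⨆ _ : i ≥ M, 𝔰 i)
            · exact @MeasurableSet.empty _ (⨆ i, ⨆ _ : i ≥ M, 𝔰 i)
          · have heq : T K ⁻¹' ((fun x => x n) ⁻¹' A) = (fun x : ℕ → ℂ => x n) ⁻¹' A := by
              ext x
              simp only [Set.mem_preimage, hT, h, if_false]
            rw [heq]
            have h2 : 𝔰 n ≤ ⨆ i, ⨆ _ : i ≥ M, 𝔰 i :=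
              le_iSup_of_le n (le_iSup_of_le (by omega) le_rfl)
            exact h2 _ (MeasurableSpace.measurableSet_comap.mpr ⟨A, hA, rfl⟩)
        exact fun t ht => h1 t ht
      exact hTm (measurableSet_toMeasurable _ _)
    have hB'eq : B' = ⋂ M', ⋃ N, Cs (M + M' + N) := by
      ext x
      simp only [hB', Set.mem_iInter, Set.mem_iUnion]
      constructor
      · intro hx M'
        obtain ⟨N, hN⟩ := hx (M + M')
        exact ⟨N, hN⟩
      · intro hx M0
        obtain ⟨N, hN⟩ := hx M0
        exact ⟨M + N, by rwa [show M0 + (M + N) = M + M0 + N by ring]⟩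
    rw [hB'eq]
    exact MeasurableSet.iInter (fun M' => MeasurableSet.iUnion (fun N => hCsM _ (by omega)))
  -- independence
  have hind : iIndep 𝔰 μ := by
    rw [iIndep_iff]
    intro s f hf
    choose! A hAm hAe using fun i (hi : i ∈ s) =>
      MeasurableSpace.measurableSet_comap.mp (hf i hi)
    have h1 : (⋂ i ∈ s, f i) = {x | ∀ n ∈ s, x n ∈ A n} := by
      ext x
      simp only [Set.mem_iInter, Set.mem_setOf_eq]
      refine forall₂_congr ?_
      intro i hi
      rw [← hAe i hi]
      rfl
    rw [h1, hprod s A hAm]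
    refine Finset.prod_congr rfl ?_
    intro i hi
    rw [← hAe i hi]
    have hsing : ∀ n ∈ ({i} : Finset ℕ), MeasurableSet (A n) := by
      intro n hn
      rw [Finset.mem_singleton] at hn
      rw [hn]
      exact hAm i hi
    have h2 := hprod {i} A hsing
    rw [Finset.prod_singleton] at h2
    rw [← h2]
    congr 1
    ext x
    simp
  have h01 := measure_zero_or_one_of_measurableSet_limsup_atTop h_le hind htail
  have hSB' : μ ((S \ B') ∪ (B' \ S)) = 0 := by
    refine measure_mono_null ?_
      (measure_iUnion_null (s := fun N => (S \ Cs N) ∪ (Cs N \ S)) hCnull)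
    intro x hx
    rcases hx with ⟨hxS, hxB'⟩ | ⟨hxB', hxS⟩
    · simp only [hB', Set.mem_iInter, not_forall, Set.mem_iUnion, not_exists] at hxB'
      obtain ⟨M, hM⟩ := hxB'
      exact Set.mem_iUnion.mpr ⟨M + 0, Or.inl ⟨hxS, hM 0⟩⟩
    · have h3 := Set.mem_iInter.mp hxB' 0
      obtain ⟨N, hN⟩ := Set.mem_iUnion.mp h3
      exact Set.mem_iUnion.mpr ⟨0 + N, Or.inr ⟨hN, hxS⟩⟩
  have hfin : μ S = μ B' := by
    refine measure_congr (MeasureTheory.ae_eq_set.mpr ⟨?_, ?_⟩)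
    · exact measure_mono_null Set.subset_union_left hSB'
    · exact measure_mono_null Set.subset_union_right hSB'
  rw [hfin]
  exact h01
namespace Stmt17

noncomputable def cc (q : ℚ × ℚ) : ℂ := (q.1 : ℝ) + (q.2 : ℝ) * Complex.I

lemma cc_dense (z : ℂ) {ε : ℝ} (hε : 0 < ε) : ∃ q : ℚ × ℚ, dist z (cc q) < ε := by
  obtain ⟨q1, hq1⟩ := exists_rat_near z.re (half_pos hε)
  obtain ⟨q2, hq2⟩ := exists_rat_near z.im (half_pos hε)
  refine ⟨(q1, q2), ?_⟩
  have hre : (z - cc (q1, q2)).re = z.re - (q1 : ℝ) := by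
    simp [cc, Complex.sub_re, Complex.add_re, Complex.mul_re]
  have him : (z - cc (q1, q2)).im = z.im - (q2 : ℝ) := by
    simp [cc, Complex.sub_im, Complex.add_im, Complex.mul_im]
  calc dist z (cc (q1, q2)) = ‖z - cc (q1, q2)‖ := Complex.dist_eq z _
    _ ≤ |(z - cc (q1, q2)).re| + |(z - cc (q1, q2)).im| :=
        Complex.norm_le_abs_re_add_abs_im _
    _ < ε := by rw [hre, him]; linarith
/-- ball index -/
def UU (i : (ℚ × ℚ) × ℚ) : Set ℂ := Metric.ball (cc i.1) (i.2 : ℝ)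
def KK (i : (ℚ × ℚ) × ℚ) : Set ℂ := Metric.closedBall (cc i.1) (i.2 : ℝ)

lemma KK_compact (i : (ℚ × ℚ) × ℚ) : IsCompact (KK i) := isCompact_closedBall _ _
lemma UU_open (i : (ℚ × ℚ) × ℚ) : IsOpen (UU i) := Metric.isOpen_ball
lemma UU_subset_KK (i : (ℚ × ℚ) × ℚ) : UU i ⊆ KK i := Metric.ball_subset_closedBall

/-- Closed sets are determined by which rational closed balls they meet. -/
lemma closed_bits {F : Set ℂ} (hF : IsClosed F) (z : ℂ) :
    z ∈ F ↔ ∀ i, z ∈ UU i → (F ∩ KK i).Nonempty := by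
  constructor
  · intro hz i hi
    exact ⟨z, hz, UU_subset_KK i hi⟩
  · intro h
    by_contra hz
    have : Fᶜ ∈ nhds z := hF.isOpen_compl.mem_nhds hz
    obtain ⟨ε, hε, hball⟩ := Metric.mem_nhds_iff.mp this
    obtain ⟨q, hq⟩ := cc_dense z (show (0:ℝ) < ε/4 by linarith)
    obtain ⟨r, hr1, hr2⟩ := exists_rat_btwn (show (ε/4 : ℝ) < ε/2 by linarith)
    have hzU : z ∈ UU (q, r) := by
      simp only [UU, Metric.mem_ball]
      exact hq.trans hr1
    obtain ⟨y, hyF, hyK⟩ := h (q, r) hzU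
    have : y ∈ Fᶜ := by
      apply hball
      simp only [Metric.mem_ball]
      have h1 : dist y (cc q) ≤ (r : ℝ) := Metric.mem_closedBall.mp hyK
      have h2 : dist y z ≤ dist y (cc q) + dist (cc q) z := dist_triangle _ _ _
      rw [dist_comm (cc q) z] at h2
      linarith [h2, h1, hq, hr2]
    exact this hyF
  -- done
/-- Compactness characterization of a compact set meeting finitely many closed sets,
via rational balls. -/
lemma compact_inter_closed_nonempty_iff {K : Set ℂ} (hK : IsCompact K) {m : ℕ}
    {F : Fin m → Set ℂ} (hF : ∀ j, IsClosed (F j)) :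
    (K ∩ ⋂ j, F j).Nonempty ↔ ∀ k : ℕ, ∃ q : ℚ × ℚ,
      (Metric.ball (cc q) (1/(k+1)) ∩ K).Nonempty ∧
      ∀ j, (F j ∩ Metric.ball (cc q) (1/(k+1))).Nonempty := by
  constructor
  · rintro ⟨z, hzK, hzF⟩ k
    obtain ⟨q, hq⟩ := cc_dense z (show (0:ℝ) < 1/(k+1) by positivity)
    refine ⟨q, ⟨z, Metric.mem_ball.mpr hq, hzK⟩, fun j => ?_⟩
    exact ⟨z, Set.mem_iInter.mp hzF j, Metric.mem_ball.mpr hq⟩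
  · intro h
    choose q hq1 hq2 using h
    choose a ha1 ha2 using hq1
    choose b hb1 hb2 using fun k j => hq2 k j
    obtain ⟨z, hzK, φ, hφ, hconv⟩ := hK.tendsto_subseq ha2
    refine ⟨z, hzK, Set.mem_iInter.mpr fun j => ?_⟩
    rw [← (hF j).closure_eq]
    rw [Metric.mem_closure_iff]
    intro ε hε
    obtain ⟨N1, hN1⟩ := Metric.tendsto_atTop.mp hconv (ε/4) (by linarith)
    obtain ⟨N2, hN2⟩ := exists_nat_one_div_lt (show (0:ℝ) < ε/4 by linarith)
    set n0 := max N1 N2 with hn0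
    set k := φ n0 with hk
    have hkb : (1 : ℝ)/(k+1) < ε/4 := by
      have h1 : (n0 : ℝ) + 1 ≤ (k : ℝ) + 1 := by
        have h0 : n0 ≤ φ n0 := hφ.le_apply
        exact_mod_cast Nat.succ_le_succ h0
      have h2 : (N2 : ℝ) + 1 ≤ (n0 : ℝ) + 1 := by
        have : N2 ≤ n0 := le_max_right _ _
        exact_mod_cast Nat.succ_le_succ this
      calc (1:ℝ)/(k+1) ≤ 1/(n0+1) := one_div_le_one_div_of_le (by positivity) h1
        _ ≤ 1/(N2+1) := one_div_le_one_div_of_le (by positivity) h2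
        _ < ε/4 := hN2
    refine ⟨b k j, hb1 k j, ?_⟩
    have d1 : dist (a k) z < ε/4 := hN1 n0 (le_max_left _ _)
    have d2 : dist (a k) (cc (q k)) < 1/(k+1) := Metric.mem_ball.mp (ha1 k)
    have d3 : dist (b k j) (cc (q k)) < 1/(k+1) := Metric.mem_ball.mp (hb2 k j)
    calc dist z (b k j) ≤ dist z (a k) + dist (a k) (cc (q k)) + dist (cc (q k)) (b k j) :=
          dist_triangle4 _ _ _ _
      _ = dist (a k) z + dist (a k) (cc (q k)) + dist (b k j) (cc (q k)) := by
          rw [dist_comm z (a k), dist_comm (cc (q k)) (b k j)]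
      _ < ε/4 + 1/(k+1) + 1/(k+1) := by linarith
      _ < ε := by linarith

end Stmt17
namespace Stmt17

def patch (N : ℕ) (w : ℕ → ℂ) (x : ℕ → ℂ) : ℕ → ℂ := fun n => if n < N then w n else x n

def cl (x : ℕ → ℂ) : Set (ℕ → ℂ) := {y | ∃ N, ∀ n ≥ N, y n = x n}

def Sig (σ : (ℕ → ℂ) → Set ℂ) (x : ℕ → ℂ) : Set ℂ := ⋂ y ∈ cl x, σ y

lemma patch_mem_cl (N : ℕ) (w x : ℕ → ℂ) : patch N w x ∈ cl x :=
  ⟨N, fun n hn => if_neg (not_lt.mpr hn)⟩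

lemma cl_eq {x x' : ℕ → ℂ} (h : x' ∈ cl x) : cl x' = cl x := by
  obtain ⟨N, hN⟩ := h
  ext y
  constructor <;> rintro ⟨M, hM⟩
  · refine ⟨max M N, fun n hn => ?_⟩
    rw [hM n (le_trans (le_max_left _ _) hn), hN n (le_trans (le_max_right _ _) hn)]
  · refine ⟨max M N, fun n hn => ?_⟩
    rw [hM n (le_trans (le_max_left _ _) hn), ← hN n (le_trans (le_max_right _ _) hn)]

lemma Sig_inv (σ : (ℕ → ℂ) → Set ℂ) {x x' : ℕ → ℂ} (h : x' ∈ cl x) :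
    Sig σ x' = Sig σ x := by
  unfold Sig
  rw [cl_eq h]

lemma Sig_closed (σ : (ℕ → ℂ) → Set ℂ) (hσcl : ∀ x, IsClosed (σ x)) (x : ℕ → ℂ) :
    IsClosed (Sig σ x) :=
  isClosed_biInter (fun y _ => hσcl y)

lemma fip (σ : (ℕ → ℂ) → Set ℂ) (hσcl : ∀ x, IsClosed (σ x)) (x : ℕ → ℂ)
    (i : (ℚ × ℚ) × ℚ) :
    (Sig σ x ∩ KK i).Nonempty ↔ ∀ (m N : ℕ) (w : Fin m → ℕ → ℂ),
      (KK i ∩ ⋂ j, σ (patch N (w j) x)).Nonempty := by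
  classical
  constructor
  · rintro ⟨z, hz1, hz2⟩ m N w
    refine ⟨z, hz2, Set.mem_iInter.mpr fun j => ?_⟩
    exact Set.mem_iInter₂.mp hz1 (patch N (w j) x) (patch_mem_cl N (w j) x)
  · intro h
    by_contra hne
    rw [Set.not_nonempty_iff_eq_empty] at hne
    have h0 : KK i ∩ ⋂ y : cl x, σ y.1 = ∅ := by
      rw [← hne, Set.inter_comm]
      congr 1
      exact (Set.biInter_eq_iInter (cl x) (fun y _ => σ y)).symm
    obtain ⟨t, ht⟩ := (KK_compact i).elim_finite_subfamily_closed (fun y : cl x => σ y.1) (fun y => hσcl y.1) h0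
    by_cases htemp : t.Nonempty
    · choose Ny hNy using fun (y : cl x) => y.2
      set N := t.sup (fun y => Ny y) with hNdef
      have key : ∀ y : {y : cl x // y ∈ t}, patch N (y.1 : ℕ → ℂ) x = (y.1 : ℕ → ℂ) := by
        intro y
        funext n
        by_cases hn : n < N
        · simp [patch, hn]
        · simp only [patch, hn, if_false]
          exact (hNy y.1 n (le_trans (Finset.le_sup (f := fun y => Ny y) y.2)
            (not_lt.mp hn))).symm
      obtain ⟨z, hzK, hz⟩ := h t.card N (fun j => ((t.equivFin.symm j).1 : ℕ → ℂ))
      have hz' : z ∈ ⋂ y ∈ t, σ ((y : cl x) : ℕ → ℂ) := by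
        rw [Set.mem_iInter₂]
        intro y hy
        have h1 := Set.mem_iInter.mp hz (t.equivFin ⟨y, hy⟩)
        rw [Equiv.symm_apply_apply] at h1
        rwa [key ⟨y, hy⟩] at h1
      rw [← ht] at hne
      exact absurd (Set.mem_inter hzK hz') (by rw [ht]; exact Set.notMem_empty z)
    · rw [Finset.not_nonempty_iff_eq_empty] at htemp
      subst htemp
      simp only [Finset.notMem_empty, Set.iInter_of_empty, Set.iInter_univ,
        Set.inter_univ] at ht
      obtain ⟨z, hzK, -⟩ := h 0 0 (fun _ => x)
      rw [ht] at hzK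
      exact Set.notMem_empty z hzK

lemma patch_map_measurable (m N : ℕ) (j : Fin m) :
    Measurable (fun p : (Fin m → ℕ → ℂ) × (ℕ → ℂ) => patch N (p.1 j) p.2) := by
  rw [measurable_pi_iff]
  intro n
  by_cases hn : n < N
  · simp only [patch, hn, if_true]
    exact (measurable_pi_apply n).comp ((measurable_pi_apply j).comp measurable_fst)
  · simp only [patch, hn, if_false]
    exact (measurable_pi_apply n).comp measurable_snd

lemma Qmeas (σ : (ℕ → ℂ) → Set ℂ) (hσcl : ∀ x, IsClosed (σ x))
    (hσ : ∀ U : Set ℂ, IsOpen U → MeasurableSet {x : ℕ → ℂ | (σ x ∩ U).Nonempty})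
    (i : (ℚ × ℚ) × ℚ) (m N : ℕ) :
    MeasurableSet {p : (Fin m → ℕ → ℂ) × (ℕ → ℂ) |
      (KK i ∩ ⋂ j, σ (patch N (p.1 j) p.2)).Nonempty} := by
  have heq : {p : (Fin m → ℕ → ℂ) × (ℕ → ℂ) |
      (KK i ∩ ⋂ j, σ (patch N (p.1 j) p.2)).Nonempty} =
      ⋂ k : ℕ, ⋃ q : ℚ × ℚ,
        ({_p : (Fin m → ℕ → ℂ) × (ℕ → ℂ) |
            (Metric.ball (cc q) (1/(k+1)) ∩ KK i).Nonempty} ∩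
         ⋂ j : Fin m, (fun p : (Fin m → ℕ → ℂ) × (ℕ → ℂ) => patch N (p.1 j) p.2) ⁻¹'
            {y | (σ y ∩ Metric.ball (cc q) (1/(k+1))).Nonempty}) := by
    ext p
    simp only [Set.mem_setOf_eq, Set.mem_iInter, Set.mem_iUnion, Set.mem_inter_iff,
      Set.mem_preimage]
    exact compact_inter_closed_nonempty_iff (KK_compact i) (fun j => hσcl _)
  rw [heq]
  refine MeasurableSet.iInter fun k => MeasurableSet.iUnion fun q => ?_
  exact (MeasurableSet.const _).inter (MeasurableSet.iInter fun j =>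
    (patch_map_measurable m N j) (hσ _ Metric.isOpen_ball))

lemma Es_nullmeas (σ : (ℕ → ℂ) → Set ℂ) (hσcl : ∀ x, IsClosed (σ x))
    (hσ : ∀ U : Set ℂ, IsOpen U → MeasurableSet {x : ℕ → ℂ | (σ x ∩ U).Nonempty})
    (μ : Measure (ℕ → ℂ)) [IsFiniteMeasure μ] (i : (ℚ × ℚ) × ℚ) :
    NullMeasurableSet {x | (Sig σ x ∩ KK i).Nonempty} μ := by
  have heq : {x | (Sig σ x ∩ KK i).Nonempty} =
      ⋂ m : ℕ, ⋂ N : ℕ, (Prod.snd '' ({p : (Fin m → ℕ → ℂ) × (ℕ → ℂ) |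
        (KK i ∩ ⋂ j, σ (patch N (p.1 j) p.2)).Nonempty})ᶜ)ᶜ := by
    ext x
    simp only [Set.mem_setOf_eq, Set.mem_iInter, Set.mem_compl_iff, Set.mem_image,
      not_exists, not_and]
    rw [fip σ hσcl x i]
    constructor
    · intro hx m N p hp hp2
      exact hp (by rw [hp2]; exact hx m N p.1)
    · intro hx m N w
      by_contra hc
      exact hx m N (w, x) hc rfl
  rw [heq]
  refine NullMeasurableSet.iInter fun m => NullMeasurableSet.iInter fun N => ?_
  refine NullMeasurableSet.compl ?_
  exact AnalyticSet.nullMeasurableSet' μ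
    (AnalyticSet.image_of_continuous
      (MeasurableSet.analyticSet (Qmeas σ hσcl hσ i m N).compl) continuous_snd)

end Stmt17
open Stmt17 in
/-- For the product measure `μ = ⊗ₙ μₙ` of Borel probability measures on `ℂ`, the tail
part `σ_∼` of a closed-valued open-measurable multifunction is almost surely equal to a
fixed closed set `A`. -/
theorem stmt_17 (μs : ℕ → Measure ℂ) (hμs : ∀ n, IsProbabilityMeasure (μs n))
    (μ : Measure (ℕ → ℂ)) (hμ : IsProbabilityMeasure μ)
    (hprod : ∀ s : Finset ℕ, ∀ A : ℕ → Set ℂ, (∀ n ∈ s, MeasurableSet (A n)) →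
      μ {x | ∀ n ∈ s, x n ∈ A n} = ∏ n ∈ s, μs n (A n))
    (σ : (ℕ → ℂ) → Set ℂ)
    (hσcl : ∀ x, IsClosed (σ x))
    (hσ : ∀ U : Set ℂ, IsOpen U → MeasurableSet {x : ℕ → ℂ | (σ x ∩ U).Nonempty}) :
    ∃ A : Set ℂ, IsClosed A ∧
      NullMeasurableSet
        {x : ℕ → ℂ | (⋂ y ∈ {y : ℕ → ℂ | ∃ N, ∀ n ≥ N, y n = x n}, σ y) = A} μ ∧
      μ {x : ℕ → ℂ | (⋂ y ∈ {y : ℕ → ℂ | ∃ N, ∀ n ≥ N, y n = x n}, σ y) = A} = 1 := by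
  classical
  set Es : ((ℚ × ℚ) × ℚ) → Set (ℕ → ℂ) := fun i => {x | (Sig σ x ∩ KK i).Nonempty} with hEs
  have hEm : ∀ i, NullMeasurableSet (Es i) μ := fun i => Es_nullmeas σ hσcl hσ μ i
  have hEinv : ∀ i (x : ℕ → ℂ) (N : ℕ) (c : ℕ → ℂ),
      ((fun n => if n < N then c n else x n) ∈ Es i ↔ x ∈ Es i) := by
    intro i x N c
    have h1 : (fun n => if n < N then c n else x n) = patch N c x := rfl
    simp only [hEs, Set.mem_setOf_eq, h1, Sig_inv σ (patch_mem_cl N c x)]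
  have hE01 : ∀ i, μ (Es i) = 0 ∨ μ (Es i) = 1 := fun i =>
    zero_one_invariant μs hμs μ hμ hprod (Es i) (hEinv i) (hEm i)
  set A : Set ℂ := (⋃ i ∈ {i | μ (Es i) = 0}, UU i)ᶜ with hA
  have hAclosed : IsClosed A := (isOpen_biUnion fun i _ => UU_open i).isClosed_compl
  -- good measurable sets
  have hG : ∀ i, ∃ G : Set (ℕ → ℂ), MeasurableSet G ∧ μ G = 1 ∧
      ∀ x ∈ G, (x ∈ Es i ↔ ¬ μ (Es i) = 0) := by
    intro i
    by_cases hi : μ (Es i) = 0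
    · refine ⟨(toMeasurable μ (Es i))ᶜ, (measurableSet_toMeasurable _ _).compl, ?_, ?_⟩
      · rw [measure_compl (measurableSet_toMeasurable _ _) (measure_ne_top μ _),
          measure_toMeasurable, hi, measure_univ]
        simp
      · intro x hx
        constructor
        · intro hxe
          exact absurd (subset_toMeasurable μ _ hxe) hx
        · intro h
          exact absurd hi h
    · have hi1 : μ (Es i) = 1 := (hE01 i).resolve_left hi
      have hco : μ ((Es i)ᶜ) = 0 := by
        rw [measure_compl₀ (hEm i) (measure_ne_top μ _), measure_univ, hi1]
        simp
      refine ⟨(toMeasurable μ ((Es i)ᶜ))ᶜ, (measurableSet_toMeasurable _ _).compl, ?_, ?_⟩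
      · rw [measure_compl (measurableSet_toMeasurable _ _) (measure_ne_top μ _),
          measure_toMeasurable, hco, measure_univ]
        simp
      · intro x hx
        constructor
        · intro _
          exact hi
        · intro _
          by_contra hxe
          exact hx (subset_toMeasurable μ _ hxe)
  choose G hGm hG1 hGE using hG
  set Gg : Set (ℕ → ℂ) := ⋂ i, G i with hGg
  have hGgm : MeasurableSet Gg := MeasurableSet.iInter fun i => hGm i
  have hGgc : μ Ggᶜ = 0 := by
    rw [hGg, Set.compl_iInter]
    refine measure_iUnion_null fun i => ?_
    rw [measure_compl (hGm i) (measure_ne_top μ _), hG1 i, measure_univ]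
    simp
  have hGg1 : μ Gg = 1 := by
    have h2 := measure_compl hGgm (measure_ne_top μ _)
    rw [hGgc, measure_univ] at h2
    have h3 : (1 : ENNReal) ≤ μ Gg := tsub_eq_zero_iff_le.mp h2.symm
    exact le_antisymm prob_le_one h3
  -- on Gg, Sig σ x = A
  have hkey : ∀ x ∈ Gg, Sig σ x = A := by
    intro x hx
    have hxG : ∀ i, x ∈ G i := Set.mem_iInter.mp hx
    ext z
    rw [closed_bits (Sig_closed σ hσcl x) z]
    simp only [hA, Set.mem_compl_iff, Set.mem_iUnion, not_exists, Set.mem_setOf_eq]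
    constructor
    · intro h i hi0 hiU
      exact ((hGE i x (hxG i)).mp (h i hiU)) hi0
    · intro h i hiU
      have hi0 : ¬ μ (Es i) = 0 := by
        by_contra hc
        exact h i hc hiU
      exact (hGE i x (hxG i)).mpr hi0
  refine ⟨A, hAclosed, ?_, ?_⟩
  · have hGT : Gg ⊆ {x : ℕ → ℂ |
        (⋂ y ∈ {y : ℕ → ℂ | ∃ N, ∀ n ≥ N, y n = x n}, σ y) = A} :=
      fun x hx => hkey x hx
    have hTG : {x : ℕ → ℂ |
        (⋂ y ∈ {y : ℕ → ℂ | ∃ N, ∀ n ≥ N, y n = x n}, σ y) = A} \ Gg ⊆ Ggᶜ :=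
      fun x hx => hx.2
    rw [show {x : ℕ → ℂ | (⋂ y ∈ {y : ℕ → ℂ | ∃ N, ∀ n ≥ N, y n = x n}, σ y) = A} =
        Gg ∪ ({x : ℕ → ℂ | (⋂ y ∈ {y : ℕ → ℂ | ∃ N, ∀ n ≥ N, y n = x n}, σ y) = A} \ Gg)
      from (Set.union_diff_cancel hGT).symm]
    exact hGgm.nullMeasurableSet.union
      (NullMeasurableSet.of_null (measure_mono_null hTG hGgc))
  · have hGT : Gg ⊆ {x : ℕ → ℂ |
        (⋂ y ∈ {y : ℕ → ℂ | ∃ N, ∀ n ≥ N, y n = x n}, σ y) = A} :=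
      fun x hx => hkey x hx
    refine le_antisymm prob_le_one ?_
    calc (1 : ENNReal) = μ Gg := hGg1.symm
      _ ≤ _ := measure_mono hGT
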